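/- There exist pairwise disjoint finite sets R, B, P of points in the plane whose minimum red-blue-purple spanning graph is unique and has a vertex of degree 15. (Such an example is obtained by placing a purple point p at the common center of a regular pentagon of radius 3 with purple points at its corners, a regular pentagon of radius 1 with red points at its corners, and a slightly rotated regular pentagon of radius 1 with blue points at its corners.) -/

import Mathlib

open scoped Classical

noncomputable section

/-- The Euclidean plane. -/
abbrev Pt : Type := EuclideanSpace ℝ (Fin 2)

/-- The simple graph on the plane whose edge set is the finite set `E`. -/
def graphOf (E : Finset (Sym2 Pt)) : SimpleGraph Pt where
  Adj x y := x ≠ y ∧ s(x, y) ∈ E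
  symm := ⟨fun x y ⟨hne, he⟩ => ⟨hne.symm, by rwa [Sym2.eq_swap]⟩⟩
  loopless := ⟨fun x ⟨hne, _⟩ => hne rfl⟩

/-- Euclidean length of an edge. -/
def edgeLen (e : Sym2 Pt) : ℝ :=
  Sym2.lift ⟨fun x y => dist x y, fun _ _ => dist_comm _ _⟩ e

/-- Total Euclidean length of a finite edge set. -/
def weight (E : Finset (Sym2 Pt)) : ℝ := ∑ e ∈ E, edgeLen e

/-- `E` is the edge set of a red-blue-purple spanning graph of `(R, B, P)`. -/
def IsRBP (R B P : Finset Pt) (E : Finset (Sym2 Pt)) : Prop :=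
  (∀ e ∈ E, ¬ e.IsDiag) ∧
  (∀ e ∈ E, ∀ x ∈ e, x ∈ R ∪ B ∪ P) ∧
  ((graphOf E).induce (↑(R ∪ P) : Set Pt)).Connected ∧
  ((graphOf E).induce (↑(B ∪ P) : Set Pt)).Connected

/-- `E` is the edge set of a minimum red-blue-purple spanning graph of `(R, B, P)`. -/
def IsMinRBP (R B P : Finset Pt) (E : Finset (Sym2 Pt)) : Prop :=
  IsRBP R B P E ∧ ∀ E', IsRBP R B P E' → weight E ≤ weight E'

lemma edgeLen_mk (x y : Pt) : edgeLen s(x, y) = dist x y := rfl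

lemma edgeLen_nonneg (e : Sym2 Pt) : 0 ≤ edgeLen e := by
  induction e using Sym2.ind with
  | _ x y => rw [edgeLen_mk]; exact dist_nonneg

lemma edgeLen_pos (e : Sym2 Pt) (h : ¬ e.IsDiag) : 0 < edgeLen e := by
  induction e using Sym2.ind with
  | _ x y =>
    rw [edgeLen_mk]
    exact dist_pos.mpr (by simpa [Sym2.mk_isDiag_iff] using h)

-- parent lemma
lemma exists_parent {V : Type*} {G : SimpleGraph V} {a b : V} (h : G.Reachable a b)
    (hne : b ≠ a) : ∃ u, G.Adj u b ∧ G.dist a u < G.dist a b := by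
  obtain ⟨w, hw⟩ := h.exists_walk_length_eq_dist
  have hpos : 0 < G.dist a b := h.pos_dist_of_ne (Ne.symm hne)
  have hl : w.reverse.length = G.dist a b := by
    rw [SimpleGraph.Walk.length_reverse, hw]
  obtain ⟨u, ha, q, hq⟩ : ∃ u, G.Adj b u ∧ ∃ q : G.Walk u a, q.length + 1 = G.dist a b := by
    generalize w.reverse = w' at hl
    cases w' with
    | nil =>
      rw [SimpleGraph.Walk.length_nil] at hl
      omega
    | cons ha q =>
      rw [SimpleGraph.Walk.length_cons] at hl
      exact ⟨_, ha, q, by omega⟩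
  refine ⟨u, ha.symm, ?_⟩
  have h1 : G.dist u a ≤ q.length := SimpleGraph.dist_le q
  rw [SimpleGraph.dist_comm] at h1
  omega
def cZ : Fin 16 → ℤ × ℤ :=
  ![(0, 0),
    (1953125, 0),
    (546875, 1875000),
    (-1646875, 1050000),
    (-1469125, -1287000),
    (824165, -1770720),
    (1562500, 1171875),
    (-687500, 1828125),
    (-1947500, -148125),
    (-403100, -1911075),
    (1721764, -922077),
    (5859375, 0),
    (1640625, 5625000),
    (-4940625, 3150000),
    (-4407375, -3861000),
    (2472495, -5312160)]

def pt (i : Fin 16) : Pt := WithLp.toLp 2 ![((cZ i).1 : ℝ), ((cZ i).2 : ℝ)]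

def d2 (i j : Fin 16) : ℤ :=
  ((cZ i).1 - (cZ j).1)^2 + ((cZ i).2 - (cZ j).2)^2

lemma dist_pt (i j : Fin 16) : dist (pt i) (pt j) = Real.sqrt ((d2 i j : ℤ) : ℝ) := by
  rw [EuclideanSpace.dist_eq]
  congr 1
  rw [Fin.sum_univ_two]
  simp only [pt, PiLp.toLp_apply, Matrix.cons_val_zero, Matrix.cons_val_one, Matrix.head_cons, Real.dist_eq,
    sq_abs, d2]
  push_cast
  ring

example : (3814697265625:ℤ) < d2 1 2 := by decide

def idxR : Finset (Fin 16) := {1,2,3,4,5}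
def idxB : Finset (Fin 16) := {6,7,8,9,10}
def idxP : Finset (Fin 16) := {0,11,12,13,14,15}
def idxS : Finset (Fin 16) := {1,2,3,4,5,6,7,8,9,10,11,12,13,14,15}

lemma cZ_inj : ∀ i j : Fin 16, cZ i = cZ j → i = j := by decide

lemma D_rr : ∀ i ∈ idxR, ∀ j ∈ idxR ∪ idxP, j ≠ i → j ≠ 0 → 3814697265625 < d2 i j := by decide
lemma D_bb : ∀ i ∈ idxB, ∀ j ∈ idxB ∪ idxP, j ≠ i → j ≠ 0 → 3814697265625 < d2 i j := by decide
lemma D_qq : ∀ i ∈ idxP.erase 0, ∀ j ∈ idxP.erase 0, j ≠ i → 9 * 3814697265625 < d2 i j := by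
  decide
lemma D_q : ∀ i ∈ idxP.erase 0, ∀ j, j ≠ i → 9 * 3814697265625 < 4 * d2 i j := by decide
lemma D_0rb : ∀ i ∈ idxR ∪ idxB, d2 0 i = 3814697265625 := by decide
lemma D_0q : ∀ i ∈ idxP.erase 0, d2 0 i = 9 * 3814697265625 := by decide

lemma pt_inj : Function.Injective pt := by
  intro i j h
  have h0 : ((cZ i).1 : ℝ) = ((cZ j).1 : ℝ) := congrFun (congrArg WithLp.ofLp h) 0
  have h1 : ((cZ i).2 : ℝ) = ((cZ j).2 : ℝ) := congrFun (congrArg WithLp.ofLp h) 1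
  exact cZ_inj i j (Prod.ext (by exact_mod_cast h0) (by exact_mod_cast h1))

def Rset : Finset Pt := idxR.image pt
def Bset : Finset Pt := idxB.image pt
def Pset : Finset Pt := idxP.image pt
def Estar : Finset (Sym2 Pt) := idxS.image (fun i => s(pt 0, pt i))

def req (v : Pt) : ℝ := if v ∈ Pset then 5859375/2 else 1953125

-- real-valued geometry, converted from the integer facts
lemma lt_dist_of_d2 {i j : Fin 16} {c : ℝ} (hc : 0 ≤ c) (h : c^2 < ((d2 i j : ℤ) : ℝ)) :
    c < dist (pt i) (pt j) := by
  rw [dist_pt]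
  exact (Real.lt_sqrt hc).mpr h

lemma G_rr : ∀ i ∈ idxR, ∀ j ∈ idxR ∪ idxP, j ≠ i → j ≠ 0 →
    (1953125:ℝ) < dist (pt j) (pt i) := by
  intro i hi j hj hne h0
  have := D_rr i hi j hj hne h0
  rw [dist_comm]
  refine lt_dist_of_d2 (by norm_num) ?_
  have : ((3814697265625:ℤ):ℝ) < ((d2 i j : ℤ):ℝ) := by exact_mod_cast this
  calc (1953125:ℝ)^2 = ((3814697265625:ℤ):ℝ) := by norm_num
  _ < _ := this

lemma G_bb : ∀ i ∈ idxB, ∀ j ∈ idxB ∪ idxP, j ≠ i → j ≠ 0 →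
    (1953125:ℝ) < dist (pt j) (pt i) := by
  intro i hi j hj hne h0
  have := D_bb i hi j hj hne h0
  rw [dist_comm]
  refine lt_dist_of_d2 (by norm_num) ?_
  have : ((3814697265625:ℤ):ℝ) < ((d2 i j : ℤ):ℝ) := by exact_mod_cast this
  calc (1953125:ℝ)^2 = ((3814697265625:ℤ):ℝ) := by norm_num
  _ < _ := this

lemma G_qq : ∀ i ∈ idxP.erase 0, ∀ j ∈ idxP.erase 0, j ≠ i →
    (5859375:ℝ) < dist (pt j) (pt i) := by
  intro i hi j hj hne
  have := D_qq i hi j hj hne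
  rw [dist_comm]
  refine lt_dist_of_d2 (by norm_num) ?_
  have : ((9 * 3814697265625:ℤ):ℝ) < ((d2 i j : ℤ):ℝ) := by exact_mod_cast this
  calc (5859375:ℝ)^2 = ((9 * 3814697265625:ℤ):ℝ) := by norm_num
  _ < _ := this

lemma G_q : ∀ i ∈ idxP.erase 0, ∀ j, j ≠ i → (5859375:ℝ)/2 < dist (pt j) (pt i) := by
  intro i hi j hne
  have := D_q i hi j hne
  rw [dist_comm]
  refine lt_dist_of_d2 (by norm_num) ?_
  have h4 : ((9 * 3814697265625:ℤ):ℝ) < ((4 * d2 i j : ℤ):ℝ) := by exact_mod_cast this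
  push_cast at h4
  nlinarith [h4]

lemma G_0rb : ∀ i ∈ idxR ∪ idxB, dist (pt 0) (pt i) = 1953125 := by
  intro i hi
  rw [dist_pt, D_0rb i hi]
  rw [show (((3814697265625:ℤ)):ℝ) = 1953125^2 by norm_num]
  exact Real.sqrt_sq (by norm_num)

lemma G_0q : ∀ i ∈ idxP.erase 0, dist (pt 0) (pt i) = 5859375 := by
  intro i hi
  rw [dist_pt, D_0q i hi]
  rw [show (((9*3814697265625:ℤ)):ℝ) = 5859375^2 by norm_num]
  exact Real.sqrt_sq (by norm_num)

lemma p0_mem_P : pt 0 ∈ Pset := Finset.mem_image.mpr ⟨0, by decide, rfl⟩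

lemma disjRB : Disjoint Rset Bset := by
  rw [Finset.disjoint_left]
  rintro v hv hv'
  obtain ⟨i, hi, rfl⟩ := Finset.mem_image.mp hv
  obtain ⟨j, hj, hji⟩ := Finset.mem_image.mp hv'
  exact (by decide : ∀ k : Fin 16, ¬(k ∈ idxR ∧ k ∈ idxB)) i ⟨hi, pt_inj hji ▸ hj⟩

lemma disjRP : Disjoint Rset Pset := by
  rw [Finset.disjoint_left]
  rintro v hv hv'
  obtain ⟨i, hi, rfl⟩ := Finset.mem_image.mp hv
  obtain ⟨j, hj, hji⟩ := Finset.mem_image.mp hv'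
  exact (by decide : ∀ k : Fin 16, ¬(k ∈ idxR ∧ k ∈ idxP)) i ⟨hi, pt_inj hji ▸ hj⟩

lemma disjBP : Disjoint Bset Pset := by
  rw [Finset.disjoint_left]
  rintro v hv hv'
  obtain ⟨i, hi, rfl⟩ := Finset.mem_image.mp hv
  obtain ⟨j, hj, hji⟩ := Finset.mem_image.mp hv'
  exact (by decide : ∀ k : Fin 16, ¬(k ∈ idxB ∧ k ∈ idxP)) i ⟨hi, pt_inj hji ▸ hj⟩

lemma memP_iff {v : Pt} : v ∈ Pset ∧ v ≠ pt 0 ↔ ∃ i ∈ idxP.erase 0, pt i = v := by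
  constructor
  · rintro ⟨hv, hne⟩
    obtain ⟨i, hi, rfl⟩ := Finset.mem_image.mp hv
    exact ⟨i, Finset.mem_erase.mpr ⟨fun h => hne (by rw [h]), hi⟩, rfl⟩
  · rintro ⟨i, hi, rfl⟩
    obtain ⟨hne, hi⟩ := Finset.mem_erase.mp hi
    exact ⟨Finset.mem_image_of_mem _ hi, fun h => hne (pt_inj h)⟩

lemma RP_image : Rset ∪ Pset = (idxR ∪ idxP).image pt := (Finset.image_union _ _).symm
lemma BP_image : Bset ∪ Pset = (idxB ∪ idxP).image pt := (Finset.image_union _ _).symm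
lemma RB_image : Rset ∪ Bset = (idxR ∪ idxB).image pt := (Finset.image_union _ _).symm
lemma RBP_image : Rset ∪ Bset ∪ Pset = (idxR ∪ idxB ∪ idxP).image pt := by
  rw [Finset.image_union, Finset.image_union]; rfl

lemma S_rr : ∀ v ∈ Rset, ∀ u ∈ Rset ∪ Pset, u ≠ v → u ≠ pt 0 →
    (1953125:ℝ) < dist u v := by
  intro v hv u hu hne h0
  obtain ⟨i, hi, rfl⟩ := Finset.mem_image.mp hv
  rw [RP_image] at hu
  obtain ⟨j, hj, rfl⟩ := Finset.mem_image.mp hu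
  exact G_rr i hi j hj (fun h => hne (by rw [h])) (fun h => h0 (by rw [h]))

lemma S_bb : ∀ v ∈ Bset, ∀ u ∈ Bset ∪ Pset, u ≠ v → u ≠ pt 0 →
    (1953125:ℝ) < dist u v := by
  intro v hv u hu hne h0
  obtain ⟨i, hi, rfl⟩ := Finset.mem_image.mp hv
  rw [BP_image] at hu
  obtain ⟨j, hj, rfl⟩ := Finset.mem_image.mp hu
  exact G_bb i hi j hj (fun h => hne (by rw [h])) (fun h => h0 (by rw [h]))

lemma S_qq : ∀ v ∈ Pset, v ≠ pt 0 → ∀ u ∈ Pset, u ≠ pt 0 → u ≠ v →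
    (5859375:ℝ) < dist u v := by
  intro v hv hv0 u hu hu0 hne
  obtain ⟨i, hi, rfl⟩ := memP_iff.mp ⟨hv, hv0⟩
  obtain ⟨j, hj, rfl⟩ := memP_iff.mp ⟨hu, hu0⟩
  exact G_qq i hi j hj (fun h => hne (by rw [h]))

lemma S_q : ∀ v ∈ Pset, v ≠ pt 0 → ∀ u ∈ Rset ∪ Bset ∪ Pset, u ≠ v →
    (5859375:ℝ)/2 < dist u v := by
  intro v hv hv0 u hu hne
  obtain ⟨i, hi, rfl⟩ := memP_iff.mp ⟨hv, hv0⟩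
  rw [RBP_image] at hu
  obtain ⟨j, hj, rfl⟩ := Finset.mem_image.mp hu
  exact G_q i hi j (fun h => hne (by rw [h]))

lemma S_0rb : ∀ v ∈ Rset ∪ Bset, dist (pt 0) v = 1953125 := by
  intro v hv
  rw [RB_image] at hv
  obtain ⟨i, hi, rfl⟩ := Finset.mem_image.mp hv
  exact G_0rb i hi

lemma S_0q : ∀ v ∈ Pset, v ≠ pt 0 → dist (pt 0) v = 5859375 := by
  intro v hv hv0
  obtain ⟨i, hi, rfl⟩ := memP_iff.mp ⟨hv, hv0⟩
  exact G_0q i hi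

lemma exists_assign (E' : Finset (Sym2 Pt)) (W : Finset Pt) (h0 : pt 0 ∈ W)
    (hconn : ((graphOf E').induce (↑W : Set Pt)).Connected) :
    ∃ f : Pt → Sym2 Pt,
      (∀ v ∈ W.erase (pt 0), ∃ u ∈ W, u ≠ v ∧ f v = s(u, v) ∧ f v ∈ E') ∧
      ∀ v ∈ W.erase (pt 0), ∀ w ∈ W.erase (pt 0), f v = f w → v = w := by
  set G := (graphOf E').induce (↑W : Set Pt) with hG
  have h0' : pt 0 ∈ (↑W : Set Pt) := Finset.mem_coe.mpr h0
  set p₀ : (↑W : Set Pt) := ⟨pt 0, h0'⟩ with hp₀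
  set D : Pt → ℕ := fun x => if hx : x ∈ (↑W : Set Pt) then G.dist p₀ ⟨x, hx⟩ else 0 with hD
  set Good : Pt → Pt → Prop :=
    fun v u => u ∈ W ∧ u ≠ v ∧ s(u, v) ∈ E' ∧ D u < D v with hGood
  have hex : ∀ v ∈ W.erase (pt 0), ∃ u, Good v u := by
    intro v hv
    obtain ⟨hvne, hvW⟩ := Finset.mem_erase.mp hv
    have hvW' : v ∈ (↑W : Set Pt) := Finset.mem_coe.mpr hvW
    have hr : G.Reachable p₀ ⟨v, hvW'⟩ := hconn.preconnected p₀ ⟨v, hvW'⟩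
    have hne : (⟨v, hvW'⟩ : (↑W : Set Pt)) ≠ p₀ := by
      intro h
      exact hvne (congrArg Subtype.val h)
    obtain ⟨u, hadj, hdlt⟩ := exists_parent hr hne
    have hadj' : (graphOf E').Adj u.1 v := hadj
    have hDu : D u.1 = G.dist p₀ u := by
      rw [hD]
      simp only [dif_pos u.2]
    have hDv : D v = G.dist p₀ ⟨v, hvW'⟩ := by
      rw [hD]
      simp only [dif_pos hvW']
    exact ⟨u.1, Finset.mem_coe.mp u.2, hadj'.1, hadj'.2, by rw [hDu, hDv]; exact hdlt⟩
  refine ⟨fun v => if h : ∃ u, Good v u then s(Classical.choose h, v) else s(v, v), ?_, ?_⟩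
  · intro v hv
    have h := hex v hv
    simp only [dif_pos h]
    obtain ⟨hW, hne, hmem, _⟩ := Classical.choose_spec h
    exact ⟨_, hW, hne, rfl, hmem⟩
  · intro v hv w hw heq
    have h1 := hex v hv
    have h2 := hex w hw
    simp only [dif_pos h1, dif_pos h2] at heq
    obtain ⟨_, hne1, _, hd1⟩ := Classical.choose_spec h1
    obtain ⟨_, hne2, _, hd2⟩ := Classical.choose_spec h2
    rcases Sym2.eq_iff.mp heq with ⟨h, rfl⟩ | ⟨ha, hb⟩
    · rfl
    · exfalso
      rw [ha] at hd1
      rw [← hb] at hd2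
      omega

lemma mem_P_of_both {x : Pt} (h1 : x ∈ Rset ∪ Pset) (h2 : x ∈ Bset ∪ Pset) : x ∈ Pset := by
  rcases Finset.mem_union.mp h1 with h1 | h1
  · rcases Finset.mem_union.mp h2 with h2 | h2
    · exact absurd h2 (Finset.disjoint_left.mp disjRB h1)
    · exact h2
  · exact h1

lemma req_P {v : Pt} (h : v ∈ Pset) : req v = 5859375/2 := if_pos h

lemma req_X {v : Pt} (h : v ∉ Pset) : req v = 1953125 := if_neg h

lemma single_bound (X : Finset Pt) (hX : X = Rset ∨ X = Bset)
    {v u : Pt} (hv : v ∈ (X ∪ Pset).erase (pt 0)) (hu : u ∈ X ∪ Pset) (hune : u ≠ v) :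
    req v ≤ dist u v ∧ (req v = dist u v → u = pt 0) := by
  obtain ⟨hvne, hvW⟩ := Finset.mem_erase.mp hv
  have hdisj : Disjoint X Pset := by
    rcases hX with rfl | rfl
    · exact disjRP
    · exact disjBP
  rcases Finset.mem_union.mp hvW with hvX | hvP
  · -- v ∈ X
    have hvnP : v ∉ Pset := Finset.disjoint_left.mp hdisj hvX
    rw [req_X hvnP]
    by_cases h0 : u = pt 0
    · subst h0
      have hvRB : v ∈ Rset ∪ Bset := by
        rcases hX with rfl | rfl
        · exact Finset.mem_union_left _ hvX
        · exact Finset.mem_union_right _ hvX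
      rw [S_0rb v hvRB]
      exact ⟨le_refl _, fun _ => rfl⟩
    · have hlt : (1953125:ℝ) < dist u v := by
        rcases hX with rfl | rfl
        · exact S_rr v hvX u hu hune h0
        · exact S_bb v hvX u hu hune h0
      exact ⟨le_of_lt hlt, fun h => absurd h (ne_of_lt hlt)⟩
  · -- v ∈ Pset
    rw [req_P hvP]
    have huRBP : u ∈ Rset ∪ Bset ∪ Pset := by
      rcases Finset.mem_union.mp hu with h | h
      · rcases hX with rfl | rfl
        · exact Finset.mem_union_left _ (Finset.mem_union_left _ h)
        · exact Finset.mem_union_left _ (Finset.mem_union_right _ h)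
      · exact Finset.mem_union_right _ h
    have hlt := S_q v hvP hvne u huRBP hune
    exact ⟨le_of_lt hlt, fun h => absurd h (ne_of_lt hlt)⟩

lemma per_edge (E' : Finset (Sym2 Pt)) (fR fB : Pt → Sym2 Pt)
    (hfR : ∀ v ∈ (Rset ∪ Pset).erase (pt 0),
      ∃ u ∈ Rset ∪ Pset, u ≠ v ∧ fR v = s(u, v) ∧ fR v ∈ E')
    (hfB : ∀ v ∈ (Bset ∪ Pset).erase (pt 0),
      ∃ u ∈ Bset ∪ Pset, u ≠ v ∧ fB v = s(u, v) ∧ fB v ∈ E')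
    (hinjR : ∀ v ∈ (Rset ∪ Pset).erase (pt 0), ∀ w ∈ (Rset ∪ Pset).erase (pt 0),
      fR v = fR w → v = w)
    (hinjB : ∀ v ∈ (Bset ∪ Pset).erase (pt 0), ∀ w ∈ (Bset ∪ Pset).erase (pt 0),
      fB v = fB w → v = w)
    (e : Sym2 Pt) :
    (∑ v ∈ ((Rset ∪ Pset).erase (pt 0)).filter (fun v => fR v = e), req v) +
      (∑ v ∈ ((Bset ∪ Pset).erase (pt 0)).filter (fun v => fB v = e), req v) ≤ edgeLen e ∧
    ((∑ v ∈ ((Rset ∪ Pset).erase (pt 0)).filter (fun v => fR v = e), req v) +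
      (∑ v ∈ ((Bset ∪ Pset).erase (pt 0)).filter (fun v => fB v = e), req v) = edgeLen e →
      (∀ v ∈ ((Rset ∪ Pset).erase (pt 0)).filter (fun v => fR v = e), e = s(pt 0, v)) ∧
      (∀ v ∈ ((Bset ∪ Pset).erase (pt 0)).filter (fun v => fB v = e), e = s(pt 0, v))) := by
  set SR := ((Rset ∪ Pset).erase (pt 0)).filter (fun v => fR v = e) with hSR
  set SB := ((Bset ∪ Pset).erase (pt 0)).filter (fun v => fB v = e) with hSB
  rcases SR.eq_empty_or_nonempty with hR | ⟨v, hvSR⟩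
  · rcases SB.eq_empty_or_nonempty with hB | ⟨w, hwSB⟩
    · -- both empty
      rw [hR, hB]
      simp only [Finset.sum_empty, Finset.notMem_empty]
      refine ⟨by simpa using edgeLen_nonneg e, fun _ => ⟨by tauto, by tauto⟩⟩
    · -- only B owner w
      obtain ⟨hwdom, hwe⟩ := Finset.mem_filter.mp hwSB
      have hSBw : SB = {w} := by
        refine Finset.eq_singleton_iff_unique_mem.mpr ⟨hwSB, fun x hx => ?_⟩
        obtain ⟨hxdom, hxe⟩ := Finset.mem_filter.mp hx
        exact hinjB x hxdom w hwdom (by rw [hxe, hwe])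
      obtain ⟨u, hu, hune, hfw, _⟩ := hfB w hwdom
      have hlen : edgeLen e = dist u w := by rw [← hwe, hfw, edgeLen_mk]
      obtain ⟨hle, heq⟩ := single_bound Bset (Or.inr rfl) hwdom hu hune
      rw [hR, hSBw]
      simp only [Finset.sum_empty, Finset.sum_singleton, Finset.notMem_empty,
        Finset.mem_singleton, zero_add]
      refine ⟨hlen ▸ hle, fun h => ⟨by tauto, ?_⟩⟩
      rintro x rfl
      rw [← hwe, hfw, heq (by rw [← hlen, ← h])]
  · -- SR has owner v
    obtain ⟨hvdom, hve⟩ := Finset.mem_filter.mp hvSR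
    have hSRv : SR = {v} := by
      refine Finset.eq_singleton_iff_unique_mem.mpr ⟨hvSR, fun x hx => ?_⟩
      obtain ⟨hxdom, hxe⟩ := Finset.mem_filter.mp hx
      exact hinjR x hxdom v hvdom (by rw [hxe, hve])
    obtain ⟨u, hu, hune, hfv, _⟩ := hfR v hvdom
    have hlen : edgeLen e = dist u v := by rw [← hve, hfv, edgeLen_mk]
    rcases SB.eq_empty_or_nonempty with hB | ⟨w, hwSB⟩
    · -- only R owner v
      obtain ⟨hle, heq⟩ := single_bound Rset (Or.inl rfl) hvdom hu hune
      rw [hB, hSRv]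
      simp only [Finset.sum_empty, Finset.sum_singleton, Finset.notMem_empty,
        Finset.mem_singleton, add_zero]
      refine ⟨hlen ▸ hle, fun h => ⟨?_, by tauto⟩⟩
      rintro x rfl
      rw [← hve, hfv, heq (by rw [← hlen, ← h])]
    · -- both owners
      obtain ⟨hwdom, hwe⟩ := Finset.mem_filter.mp hwSB
      have hSBw : SB = {w} := by
        refine Finset.eq_singleton_iff_unique_mem.mpr ⟨hwSB, fun x hx => ?_⟩
        obtain ⟨hxdom, hxe⟩ := Finset.mem_filter.mp hx
        exact hinjB x hxdom w hwdom (by rw [hxe, hwe])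
      obtain ⟨u', hu', hune', hfw, _⟩ := hfB w hwdom
      have hee : s(u, v) = s(u', w) := by rw [← hfv, ← hfw, hve, hwe]
      have hv0 : v ≠ pt 0 := (Finset.mem_erase.mp hvdom).1
      have hw0 : w ≠ pt 0 := (Finset.mem_erase.mp hwdom).1
      have hvRP : v ∈ Rset ∪ Pset := (Finset.mem_erase.mp hvdom).2
      have hwBP : w ∈ Bset ∪ Pset := (Finset.mem_erase.mp hwdom).2
      rw [hSRv, hSBw]
      simp only [Finset.sum_singleton]
      rcases Sym2.eq_iff.mp hee with ⟨rfl, rfl⟩ | ⟨rfl, rfl⟩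
      · -- same owner: w = v purple, u' = u
        have hvP : v ∈ Pset := mem_P_of_both hvRP hwBP
        have huP : u ∈ Pset := mem_P_of_both hu hu'
        rw [req_P hvP]
        by_cases h0 : u = pt 0
        · subst h0
          refine ⟨?_, fun _ => ⟨?_, ?_⟩⟩
          · rw [hlen, S_0q v hvP hv0]
            norm_num
          · intro x hx
            rw [Finset.mem_singleton] at hx
            subst hx
            rw [← hve, hfv]
          · intro x hx
            rw [Finset.mem_singleton] at hx
            subst hx
            rw [← hwe, hfw]
        · have hlt : (5859375:ℝ) < dist u v := S_qq v hvP hv0 u huP h0 hune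
          constructor
          · rw [hlen]
            linarith
          · intro h
            rw [hlen] at h
            exfalso
            linarith [h, hlt]
      · -- cross: the parents are the other purple owner
        have huPd : u ∈ Pset := by
          rcases Finset.mem_union.mp hwBP with h2 | h2
          · rcases Finset.mem_union.mp hu with h | h
            · exact absurd h2 (Finset.disjoint_left.mp disjRB h)
            · exact h
          · exact h2
        have hvP : v ∈ Pset := by
          rcases Finset.mem_union.mp hu' with h | h
          · rcases Finset.mem_union.mp hvRP with h2 | h2
            · exact absurd h (Finset.disjoint_left.mp disjRB h2)
            · exact h2
          · exact h
        have hlt : (5859375:ℝ) < dist u v := S_qq v hvP hv0 u huPd hw0 hune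
        rw [req_P hvP, req_P huPd]
        constructor
        · rw [hlen]
          linarith
        · intro h
          rw [hlen] at h
          exfalso
          linarith [h, hlt]

lemma idxS_ne0 : ∀ i ∈ idxS, i ≠ 0 := by decide

lemma p0_not_R : pt 0 ∉ Rset := Finset.disjoint_right.mp disjRP p0_mem_P
lemma p0_not_B : pt 0 ∉ Bset := Finset.disjoint_right.mp disjBP p0_mem_P

lemma star_edge_mem {v : Pt} (hv : v ∈ Rset ∪ Bset ∪ Pset) (hne : v ≠ pt 0) :
    s(pt 0, v) ∈ Estar := by
  rw [RBP_image] at hv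
  obtain ⟨i, hi, rfl⟩ := Finset.mem_image.mp hv
  have hi0 : i ≠ 0 := fun h => hne (by rw [h])
  have hiS : i ∈ idxS := (by decide : ∀ i ∈ idxR ∪ idxB ∪ idxP, i ≠ 0 → i ∈ idxS) i hi hi0
  exact Finset.mem_image_of_mem _ hiS

lemma star_connected (W : Finset Pt) (h0 : pt 0 ∈ W)
    (hW : ∀ v ∈ W, v ≠ pt 0 → s(pt 0, v) ∈ Estar) :
    ((graphOf Estar).induce (↑W : Set Pt)).Connected := by
  have h0' : pt 0 ∈ (↑W : Set Pt) := Finset.mem_coe.mpr h0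
  have key : ∀ v : (↑W : Set Pt),
      ((graphOf Estar).induce (↑W : Set Pt)).Reachable ⟨pt 0, h0'⟩ v := by
    intro v
    by_cases hv : v.1 = pt 0
    · have : v = ⟨pt 0, h0'⟩ := Subtype.ext hv
      rw [this]
    · have hadj : ((graphOf Estar).induce (↑W : Set Pt)).Adj ⟨pt 0, h0'⟩ v := by
        show (graphOf Estar).Adj (pt 0) v.1
        exact ⟨fun h => hv h.symm, hW v.1 (Finset.mem_coe.mp v.2) hv⟩
      exact hadj.reachable
  have : Nonempty (↑W : Set Pt) := ⟨⟨pt 0, h0'⟩⟩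
  exact ⟨fun u v => (key u).symm.trans (key v)⟩

lemma isRBP_star : IsRBP Rset Bset Pset Estar := by
  refine ⟨?_, ?_, ?_, ?_⟩
  · intro e he
    obtain ⟨i, hi, rfl⟩ := Finset.mem_image.mp he
    rw [Sym2.mk_isDiag_iff]
    intro h
    exact idxS_ne0 i hi (pt_inj h).symm
  · intro e he x hx
    obtain ⟨i, hi, rfl⟩ := Finset.mem_image.mp he
    rcases Sym2.mem_iff.mp hx with rfl | rfl
    · exact Finset.mem_union_right _ p0_mem_P
    · rw [RBP_image]
      exact Finset.mem_image_of_mem _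
        ((by decide : ∀ i ∈ idxS, i ∈ idxR ∪ idxB ∪ idxP) i hi)
  · refine star_connected _ (Finset.mem_union_right _ p0_mem_P) ?_
    intro v hv hne
    refine star_edge_mem ?_ hne
    rcases Finset.mem_union.mp hv with h | h
    · exact Finset.mem_union_left _ (Finset.mem_union_left _ h)
    · exact Finset.mem_union_right _ h
  · refine star_connected _ (Finset.mem_union_right _ p0_mem_P) ?_
    intro v hv hne
    refine star_edge_mem ?_ hne
    rcases Finset.mem_union.mp hv with h | h
    · exact Finset.mem_union_left _ (Finset.mem_union_right _ h)
    · exact Finset.mem_union_right _ h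

lemma star_injOn : ∀ i ∈ idxS, ∀ j ∈ idxS, s(pt 0, pt i) = s(pt 0, pt j) → i = j := by
  intro i hi j hj h
  rcases Sym2.eq_iff.mp h with ⟨_, h2⟩ | ⟨h1, _⟩
  · exact pt_inj h2
  · exact absurd (pt_inj h1).symm (idxS_ne0 j hj)

lemma card_Pset : Pset.card = 6 := by
  rw [Pset, Finset.card_image_of_injective _ pt_inj]
  decide

lemma card_Rset : Rset.card = 5 := by
  rw [Rset, Finset.card_image_of_injective _ pt_inj]
  decide

lemma card_Bset : Bset.card = 5 := by
  rw [Bset, Finset.card_image_of_injective _ pt_inj]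
  decide

lemma sum_req_R : (∑ v ∈ (Rset ∪ Pset).erase (pt 0), req v) = 48828125/2 := by
  rw [Finset.erase_union_distrib, Finset.erase_eq_of_notMem p0_not_R]
  rw [Finset.sum_union (disjRP.mono_right (Finset.erase_subset _ _))]
  have h1 : (∑ v ∈ Rset, req v) = 5 * 1953125 := by
    rw [Finset.sum_congr rfl
      (fun v hv => req_X (Finset.disjoint_left.mp disjRP hv)), Finset.sum_const, card_Rset]
    norm_num
  have h2 : (∑ v ∈ Pset.erase (pt 0), req v) = 5 * (5859375/2) := by
    rw [Finset.sum_congr rfl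
      (fun v hv => req_P (Finset.mem_of_mem_erase hv)), Finset.sum_const,
      Finset.card_erase_of_mem p0_mem_P, card_Pset]
    norm_num
  rw [h1, h2]
  norm_num

lemma sum_req_B : (∑ v ∈ (Bset ∪ Pset).erase (pt 0), req v) = 48828125/2 := by
  rw [Finset.erase_union_distrib, Finset.erase_eq_of_notMem p0_not_B]
  rw [Finset.sum_union (disjBP.mono_right (Finset.erase_subset _ _))]
  have h1 : (∑ v ∈ Bset, req v) = 5 * 1953125 := by
    rw [Finset.sum_congr rfl
      (fun v hv => req_X (Finset.disjoint_left.mp disjBP hv)), Finset.sum_const, card_Bset]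
    norm_num
  have h2 : (∑ v ∈ Pset.erase (pt 0), req v) = 5 * (5859375/2) := by
    rw [Finset.sum_congr rfl
      (fun v hv => req_P (Finset.mem_of_mem_erase hv)), Finset.sum_const,
      Finset.card_erase_of_mem p0_mem_P, card_Pset]
    norm_num
  rw [h1, h2]
  norm_num


lemma weight_star : weight Estar = 48828125 := by
  rw [weight, Estar, Finset.sum_image star_injOn]
  have hsplit : idxS = (idxR ∪ idxB) ∪ idxP.erase 0 := by decide
  rw [hsplit, Finset.sum_union (by decide)]
  have h1 : (∑ i ∈ idxR ∪ idxB, edgeLen s(pt 0, pt i)) = 10 * 1953125 := by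
    rw [Finset.sum_congr rfl (fun i hi => by rw [edgeLen_mk, G_0rb i hi]), Finset.sum_const,
      (by decide : (idxR ∪ idxB).card = 10)]
    norm_num
  have h2 : (∑ i ∈ idxP.erase 0, edgeLen s(pt 0, pt i)) = 5 * 5859375 := by
    rw [Finset.sum_congr rfl (fun i hi => by rw [edgeLen_mk, G_0q i hi]), Finset.sum_const,
      (by decide : (idxP.erase 0).card = 5)]
    norm_num
  rw [h1, h2]
  norm_num

lemma main_bound (E' : Finset (Sym2 Pt))
    (hdiag : ∀ e ∈ E', ¬ e.IsDiag)
    (hcR : ((graphOf E').induce (↑(Rset ∪ Pset) : Set Pt)).Connected)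
    (hcB : ((graphOf E').induce (↑(Bset ∪ Pset) : Set Pt)).Connected) :
    48828125 ≤ weight E' ∧ (weight E' = 48828125 → E' = Estar) := by
  obtain ⟨fR, hfR, hinjR⟩ :=
    exists_assign E' (Rset ∪ Pset) (Finset.mem_union_right _ p0_mem_P) hcR
  obtain ⟨fB, hfB, hinjB⟩ :=
    exists_assign E' (Bset ∪ Pset) (Finset.mem_union_right _ p0_mem_P) hcB
  set domR := (Rset ∪ Pset).erase (pt 0) with hdomR
  set domB := (Bset ∪ Pset).erase (pt 0) with hdomB
  set U := domR.image fR ∪ domB.image fB with hU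
  have hUE : U ⊆ E' := by
    intro e he
    rcases Finset.mem_union.mp he with h | h
    · obtain ⟨v, hv, rfl⟩ := Finset.mem_image.mp h
      obtain ⟨u, _, _, _, hmem⟩ := hfR v hv
      exact hmem
    · obtain ⟨v, hv, rfl⟩ := Finset.mem_image.mp h
      obtain ⟨u, _, _, _, hmem⟩ := hfB v hv
      exact hmem
  have hsum1 : (∑ e ∈ U, edgeLen e) ≤ weight E' :=
    Finset.sum_le_sum_of_subset_of_nonneg hUE (fun e _ _ => edgeLen_nonneg e)
  have hfibR : (∑ e ∈ U, ∑ v ∈ domR.filter (fun v => fR v = e), req v)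
      = ∑ v ∈ domR, req v :=
    Finset.sum_fiberwise_of_maps_to
      (fun v hv => Finset.mem_union_left _ (Finset.mem_image_of_mem fR hv)) req
  have hfibB : (∑ e ∈ U, ∑ v ∈ domB.filter (fun v => fB v = e), req v)
      = ∑ v ∈ domB, req v :=
    Finset.sum_fiberwise_of_maps_to
      (fun v hv => Finset.mem_union_right _ (Finset.mem_image_of_mem fB hv)) req
  have hg : (∑ e ∈ U, ((∑ v ∈ domR.filter (fun v => fR v = e), req v)
      + (∑ v ∈ domB.filter (fun v => fB v = e), req v))) = 48828125 := by
    rw [Finset.sum_add_distrib, hfibR, hfibB, hdomR, hdomB, sum_req_R, sum_req_B]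
    norm_num
  have hper := fun e => per_edge E' fR fB hfR hfB hinjR hinjB e
  have hsum2 : (48828125:ℝ) ≤ ∑ e ∈ U, edgeLen e := by
    rw [← hg]
    exact Finset.sum_le_sum (fun e _ => (hper e).1)
  refine ⟨le_trans hsum2 hsum1, ?_⟩
  intro hw
  have hwE : (∑ e ∈ E', edgeLen e) = 48828125 := hw
  have hUlen : (∑ e ∈ U, edgeLen e) = 48828125 := by
    refine le_antisymm ?_ hsum2
    calc (∑ e ∈ U, edgeLen e) ≤ weight E' := hsum1
    _ = 48828125 := hw
  have hEU : E' = U := by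
    have hsdiff := Finset.sum_sdiff (f := edgeLen) hUE
    have hsd : (∑ e ∈ E' \ U, edgeLen e) = 0 := by linarith [hsdiff, hwE, hUlen]
    have hzero := (Finset.sum_eq_zero_iff_of_nonneg (fun e _ => edgeLen_nonneg e)).mp hsd
    have hempty : E' \ U = ∅ := by
      refine Finset.eq_empty_of_forall_notMem (fun e he => ?_)
      have hpos := edgeLen_pos e (hdiag e (Finset.mem_sdiff.mp he).1)
      exact absurd (hzero e he) (ne_of_gt hpos)
    exact Finset.Subset.antisymm (Finset.sdiff_eq_empty_iff_subset.mp hempty) hUE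
  have hperEq : ∀ e ∈ U, (∑ v ∈ domR.filter (fun v => fR v = e), req v)
      + (∑ v ∈ domB.filter (fun v => fB v = e), req v) = edgeLen e := by
    have hz : (∑ e ∈ U, (edgeLen e - ((∑ v ∈ domR.filter (fun v => fR v = e), req v)
        + (∑ v ∈ domB.filter (fun v => fB v = e), req v)))) = 0 := by
      rw [Finset.sum_sub_distrib, hUlen, hg]
      ring
    have hall := (Finset.sum_eq_zero_iff_of_nonneg
      (fun e _ => sub_nonneg.mpr (hper e).1)).mp hz
    intro e he
    have h := hall e he
    linarith [h]
  have hstR : ∀ v ∈ domR, fR v = s(pt 0, v) := by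
    intro v hv
    have hm : fR v ∈ U := Finset.mem_union_left _ (Finset.mem_image_of_mem fR hv)
    exact ((hper (fR v)).2 (hperEq _ hm)).1 v (Finset.mem_filter.mpr ⟨hv, rfl⟩)
  have hstB : ∀ v ∈ domB, fB v = s(pt 0, v) := by
    intro v hv
    have hm : fB v ∈ U := Finset.mem_union_right _ (Finset.mem_image_of_mem fB hv)
    exact ((hper (fB v)).2 (hperEq _ hm)).2 v (Finset.mem_filter.mpr ⟨hv, rfl⟩)
  have hUstar : U = Estar := by
    apply Finset.Subset.antisymm
    · intro e he
      rcases Finset.mem_union.mp he with h | h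
      · obtain ⟨v, hv, rfl⟩ := Finset.mem_image.mp h
        rw [hstR v hv]
        obtain ⟨hvne, hvm⟩ := Finset.mem_erase.mp hv
        refine star_edge_mem ?_ hvne
        rcases Finset.mem_union.mp hvm with h2 | h2
        · exact Finset.mem_union_left _ (Finset.mem_union_left _ h2)
        · exact Finset.mem_union_right _ h2
      · obtain ⟨v, hv, rfl⟩ := Finset.mem_image.mp h
        rw [hstB v hv]
        obtain ⟨hvne, hvm⟩ := Finset.mem_erase.mp hv
        refine star_edge_mem ?_ hvne
        rcases Finset.mem_union.mp hvm with h2 | h2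
        · exact Finset.mem_union_left _ (Finset.mem_union_right _ h2)
        · exact Finset.mem_union_right _ h2
    · intro e he
      obtain ⟨i, hi, rfl⟩ := Finset.mem_image.mp he
      have hne : pt i ≠ pt 0 := fun h => idxS_ne0 i hi (pt_inj h)
      rcases (by decide : ∀ i ∈ idxS, i ∈ idxR ∪ idxP ∨ i ∈ idxB ∪ idxP) i hi with h | h
      · have hv : pt i ∈ domR := Finset.mem_erase.mpr
          ⟨hne, by rw [RP_image]; exact Finset.mem_image_of_mem _ h⟩
        exact Finset.mem_union_left _ (Finset.mem_image.mpr ⟨pt i, hv, hstR _ hv⟩)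
      · have hv : pt i ∈ domB := Finset.mem_erase.mpr
          ⟨hne, by rw [BP_image]; exact Finset.mem_image_of_mem _ h⟩
        exact Finset.mem_union_right _ (Finset.mem_image.mpr ⟨pt i, hv, hstB _ hv⟩)
  rw [hEU, hUstar]

lemma card_Estar : Estar.card = 15 := by
  rw [Estar, Finset.card_image_of_injOn
    (fun i hi j hj h => star_injOn i (Finset.mem_coe.mp hi) j (Finset.mem_coe.mp hj) h)]
  decide

lemma filter_Estar : (Estar.filter (fun e => pt 0 ∈ e)).card = 15 := by
  rw [Finset.filter_true_of_mem, card_Estar]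
  intro e he
  obtain ⟨i, hi, rfl⟩ := Finset.mem_image.mp he
  exact Sym2.mem_iff.mpr (Or.inl rfl)

/-- there exist pairwise disjoint finite sets `R`, `B`, `P` of points
in the plane whose minimum red-blue-purple spanning graph is unique and has a
vertex of degree 15. -/
theorem exists_unique_minRBP_with_degree_15 :
    ∃ (R B P : Finset Pt) (E : Finset (Sym2 Pt)) (x : Pt),
      Disjoint R B ∧ Disjoint R P ∧ Disjoint B P ∧
      IsMinRBP R B P E ∧ (∀ E' : Finset (Sym2 Pt), IsMinRBP R B P E' → E' = E) ∧
      (E.filter (fun e => x ∈ e)).card = 15 := by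
  refine ⟨Rset, Bset, Pset, Estar, pt 0, disjRB, disjRP, disjBP, ?_, ?_, filter_Estar⟩
  · refine ⟨isRBP_star, fun E' h => ?_⟩
    rw [weight_star]
    exact (main_bound E' h.1 h.2.2.1 h.2.2.2).1
  · intro E' hmin
    obtain ⟨hrbp, hle⟩ := hmin
    have h1 : weight E' ≤ 48828125 := by
      rw [← weight_star]
      exact hle Estar isRBP_star
    have h2 := main_bound E' hrbp.1 hrbp.2.2.1 hrbp.2.2.2
    exact h2.2 (le_antisymm h1 h2.1)
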